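/- Generalized second law (information-theoretic form). Let n ≥ 1 and let X_1, …, X_n, X'_1, …, X'_n be random variables taking values in finite types with everywhere strictly positive joint pmf p. For each j let dep(j) ⊆ {1,…,j−1}, D_j := (X_i)_{i∈dep(j)}, and let q_j(· | x', d) be strictly positive probability mass functions on the value type of X_j. Define Q_j := E[ ln( p(X'_j | X_j, D_j) / q_j(X_j | X'_j, D_j) ) ]. Then H((X'_1,…,X'_n)) − H((X_1,…,X_n)) + Σ_{j=1}^n Q_j ≥ Δ_I, where Δ_I := Σ_{j=2}^n [ I(X'_j; D_j) − I(X_j; D_j) ] − Σ_{j=2}^n [ I(X'_j; (X'_1,…,X'_{j−1})) − I(X_j; (X_1,…,X_{j−1})) ]. -/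

import Mathlib

open scoped BigOperators

set_option maxHeartbeats 1600000

section InfoDefs

variable {Ω : Type*} [Fintype Ω]

/-- Pushforward probability mass function: `P(X = a)` for the random variable `X`
on the finite probability space `(Ω, μ)`. -/
def prob {α : Type*} [DecidableEq α] (μ : Ω → ℝ) (X : Ω → α) (a : α) : ℝ :=
  ∑ ω, if X ω = a then μ ω else 0

/-- Shannon entropy (natural logarithm) of the random variable `X` under `μ`. -/
noncomputable def ent {α : Type*} [Fintype α] [DecidableEq α] (μ : Ω → ℝ) (X : Ω → α) : ℝ :=
  ∑ a, Real.negMulLog (prob μ X a)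

/-- Conditional Shannon entropy `H(X | Y)`. -/
noncomputable def condEnt {α β : Type*} [Fintype α] [DecidableEq α] [Fintype β] [DecidableEq β]
    (μ : Ω → ℝ) (X : Ω → α) (Y : Ω → β) : ℝ :=
  ent μ (fun ω => (X ω, Y ω)) - ent μ Y

/-- Mutual information `I(X;Y)`. -/
noncomputable def mi {α β : Type*} [Fintype α] [DecidableEq α] [Fintype β] [DecidableEq β]
    (μ : Ω → ℝ) (X : Ω → α) (Y : Ω → β) : ℝ :=
  ent μ X + ent μ Y - ent μ (fun ω => (X ω, Y ω))

/-- Conditional mutual information `I(X;Y|Z)`. -/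
noncomputable def cmi {α β γ : Type*} [Fintype α] [DecidableEq α] [Fintype β] [DecidableEq β]
    [Fintype γ] [DecidableEq γ] (μ : Ω → ℝ) (X : Ω → α) (Y : Ω → β) (Z : Ω → γ) : ℝ :=
  ent μ (fun ω => (X ω, Z ω)) + ent μ (fun ω => (Y ω, Z ω))
    - ent μ (fun ω => (X ω, Y ω, Z ω)) - ent μ Z

/-- Conditional independence of `U` and `V` given `W`:
the joint law satisfies `P(U,V,W)·P(W) = P(U,W)·P(V,W)` pointwise. -/
def CondIndep {α β γ : Type*} [DecidableEq α] [DecidableEq β] [DecidableEq γ]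
    (μ : Ω → ℝ) (U : Ω → α) (V : Ω → β) (W : Ω → γ) : Prop :=
  ∀ u v w, prob μ (fun ω => (U ω, V ω, W ω)) (u, v, w) * prob μ W w
    = prob μ (fun ω => (U ω, W ω)) (u, w) * prob μ (fun ω => (V ω, W ω)) (v, w)

/-- The tuple `(A_0, …, A_{n-1})` of the first `n` members of a family of random
variables, viewed as a single random variable valued in a (dependent) product type. -/
def tup {α : ℕ → Type*} (A : (i : ℕ) → Ω → α i) (n : ℕ) : Ω → ((i : Fin n) → α i.1) :=
  fun ω i => A i.1 ω

/-- The restriction `(A_i)_{i ∈ s}` of a family of random variables to a finite index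
set `s`, viewed as a single random variable (a one-point constant if `s = ∅`). -/
def restrict {α : ℕ → Type*} (A : (i : ℕ) → Ω → α i) (s : Finset ℕ) :
    Ω → ((i : s) → α i.1) :=
  fun ω i => A i.1 ω

end InfoDefs


section AuxLemmas

variable {Ω : Type*} [Fintype Ω]

lemma prob_nonneg' {α : Type*} [DecidableEq α] {μ : Ω → ℝ} (hμ0 : ∀ ω, 0 ≤ μ ω)
    (X : Ω → α) (a : α) : 0 ≤ prob μ X a :=
  Finset.sum_nonneg fun ω _ => by by_cases h : X ω = a <;> simp [h, hμ0 ω]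

lemma sum_prob' {α : Type*} [Fintype α] [DecidableEq α] (μ : Ω → ℝ) (X : Ω → α) :
    ∑ a, prob μ X a = ∑ ω, μ ω := by
  unfold prob
  rw [Finset.sum_comm]
  exact Finset.sum_congr rfl fun ω _ => by simp

lemma sum_mul_comp' {γ : Type*} [Fintype γ] [DecidableEq γ] (μ : Ω → ℝ) (Z : Ω → γ)
    (f : γ → ℝ) : ∑ ω, μ ω * f (Z ω) = ∑ v, prob μ Z v * f v := by
  unfold prob
  simp only [Finset.sum_mul]
  rw [Finset.sum_comm]
  exact Finset.sum_congr rfl fun ω _ => by simp [ite_mul]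

lemma prob_le' {γ δ : Type*} [DecidableEq γ] [DecidableEq δ] {μ : Ω → ℝ}
    (hμ0 : ∀ ω, 0 ≤ μ ω) {Z : Ω → γ} {W : Ω → δ} {v : γ} {w : δ}
    (h : ∀ ω, Z ω = v → W ω = w) : prob μ Z v ≤ prob μ W w := by
  refine Finset.sum_le_sum fun ω _ => ?_
  by_cases hz : Z ω = v
  · simp [hz, h ω hz]
  · by_cases hw : W ω = w <;> simp [hz, hw, hμ0 ω]

lemma le_prob_apply' {γ : Type*} [DecidableEq γ] {μ : Ω → ℝ} (hμ0 : ∀ ω, 0 ≤ μ ω)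
    (Z : Ω → γ) (ω : Ω) : μ ω ≤ prob μ Z (Z ω) := by
  have h := Finset.single_le_sum (f := fun ω' => if Z ω' = Z ω then μ ω' else 0)
    (fun i _ => by by_cases h : Z i = Z ω <;> simp [h, hμ0 i]) (Finset.mem_univ ω)
  simpa [prob] using h

lemma ent_comp_inj' {α β : Type*} [Fintype α] [DecidableEq α] [Fintype β] [DecidableEq β]
    (μ : Ω → ℝ) (X : Ω → α) {f : α → β} (hf : Function.Injective f) :
    ent μ (fun ω => f (X ω)) = ent μ X := by
  unfold ent
  rw [← Finset.sum_subset (Finset.subset_univ (Finset.image f Finset.univ))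
    (fun b _ hb => ?_), Finset.sum_image (fun a _ b _ h => hf h)]
  · refine Finset.sum_congr rfl fun a _ => ?_
    congr 1
    unfold prob
    exact Finset.sum_congr rfl fun ω _ => by simp [hf.eq_iff]
  · have h0 : prob μ (fun ω => f (X ω)) b = 0 := by
      refine Finset.sum_eq_zero fun ω _ => ?_
      have : f (X ω) ≠ b := fun h => hb (Finset.mem_image.mpr ⟨X ω, Finset.mem_univ _, h⟩)
      simp [this]
    simp [h0]

lemma ent_eq' {γ : Type*} [Fintype γ] [DecidableEq γ] (μ : Ω → ℝ) (Z : Ω → γ) :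
    ent μ Z = - ∑ ω, μ ω * Real.log (prob μ Z (Z ω)) := by
  have h := sum_mul_comp' μ Z (fun v => Real.log (prob μ Z v))
  rw [h]
  unfold ent
  rw [← Finset.sum_neg_distrib]
  exact Finset.sum_congr rfl fun v _ => by simp [Real.negMulLog]

lemma gibbs' {ι : Type*} [Fintype ι] (p r : ι → ℝ) (hp : ∀ i, 0 ≤ p i)
    (hr0 : ∀ i, 0 ≤ r i) (hr : ∀ i, p i ≠ 0 → 0 < r i)
    (hsum : ∑ i, r i ≤ ∑ i, p i) :
    0 ≤ ∑ i, p i * Real.log (p i / r i) := by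
  have key : ∀ i, p i - r i ≤ p i * Real.log (p i / r i) := by
    intro i
    rcases eq_or_lt_of_le (hp i) with h0 | h0
    · rw [← h0]; simpa using hr0 i
    · have hri := hr i (ne_of_gt h0)
      have hx : 0 < r i / p i := div_pos hri h0
      have h2 := Real.log_le_sub_one_of_pos hx
      have h3 : Real.log (p i / r i) = - Real.log (r i / p i) := by
        rw [← Real.log_inv, inv_div]
      have h1 : 1 - r i / p i ≤ Real.log (p i / r i) := by rw [h3]; linarith
      have h4 := mul_le_mul_of_nonneg_left h1 (le_of_lt h0)
      have h5 : p i * (1 - r i / p i) = p i - r i := by field_simp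
      linarith
  calc (0:ℝ) ≤ ∑ i, (p i - r i) := by
        rw [Finset.sum_sub_distrib]; linarith
    _ ≤ _ := Finset.sum_le_sum fun i _ => key i

lemma telescope' (g : ℕ → ℝ) : ∀ n, 1 ≤ n →
    ∑ j ∈ Finset.Ico 1 n, (g (j+1) - g j) = g n - g 1 := by
  intro n hn
  induction n with
  | zero => omega
  | succ m ih =>
    rcases Nat.eq_or_lt_of_le hn with h | h
    · obtain rfl : m = 0 := by omega
      simp
    · have hm : 1 ≤ m := by omega
      rw [Finset.sum_Ico_succ_top hm, ih hm]
      ring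

end AuxLemmas

/-- The dissipated heat (divided by temperature) of subsystem `j` under local detailed
balance with backward kernel `q j`:
`Q_j := E[ln(p(X'_j | X_j, D_j) / q_j(X_j | X'_j, D_j))]`, where `D_j` is the
restriction of the initial states to the dependency set `dep j`. -/
noncomputable def Qheat {Ω : Type*} [Fintype Ω] {α : ℕ → Type*} [∀ i, Fintype (α i)]
    [∀ i, DecidableEq (α i)] (μ : Ω → ℝ) (X X' : (i : ℕ) → Ω → α i) (dep : ℕ → Finset ℕ)
    (q : (j : ℕ) → α j → α j → ((i : dep j) → α i.1) → ℝ) (j : ℕ) : ℝ :=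
  ∑ ω, μ ω *
    Real.log ((prob μ (fun ω' => (X j ω', X' j ω', restrict X (dep j) ω'))
          (X j ω, X' j ω, restrict X (dep j) ω)
        / prob μ (fun ω' => (X j ω', restrict X (dep j) ω')) (X j ω, restrict X (dep j) ω))
      / q j (X j ω) (X' j ω) (restrict X (dep j) ω))


lemma Qheat_ge {Ω : Type*} [Fintype Ω] {α : ℕ → Type*} [∀ i, Fintype (α i)]
    [∀ i, DecidableEq (α i)] (μ : Ω → ℝ) (hμ0 : ∀ ω, 0 ≤ μ ω) (hμ1 : ∑ ω, μ ω = 1)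
    (X X' : (i : ℕ) → Ω → α i) (dep : ℕ → Finset ℕ)
    (q : (j : ℕ) → α j → α j → ((i : dep j) → α i.1) → ℝ)
    (hq0 : ∀ j x x' d, 0 < q j x x' d) (hq1 : ∀ j x' d, ∑ x, q j x x' d = 1) (j : ℕ) :
    ent μ (fun ω => (X j ω, restrict X (dep j) ω))
      - ent μ (fun ω => (X' j ω, restrict X (dep j) ω)) ≤ Qheat μ X X' dep q j := by
  classical
  set D : Ω → ((i : dep j) → α i.1) := restrict X (dep j) with hD
  set P3 : α j × α j × ((i : dep j) → α i.1) → ℝ :=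
    prob μ (fun ω => (X j ω, X' j ω, D ω)) with hP3def
  set PAD : α j × ((i : dep j) → α i.1) → ℝ := prob μ (fun ω => (X j ω, D ω)) with hPADdef
  set PBD : α j × ((i : dep j) → α i.1) → ℝ := prob μ (fun ω => (X' j ω, D ω)) with hPBDdef
  have hEA : ent μ (fun ω => (X j ω, D ω)) = - ∑ ω, μ ω * Real.log (PAD (X j ω, D ω)) :=
    ent_eq' μ (fun ω => (X j ω, D ω))
  have hEB : ent μ (fun ω => (X' j ω, D ω)) = - ∑ ω, μ ω * Real.log (PBD (X' j ω, D ω)) :=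
    ent_eq' μ (fun ω => (X' j ω, D ω))
  have hQunf : Qheat μ X X' dep q j
      = ∑ ω, μ ω * Real.log ((P3 (X j ω, X' j ω, D ω) / PAD (X j ω, D ω))
          / q j (X j ω) (X' j ω) (D ω)) := rfl
  have key : Qheat μ X X' dep q j
      - (ent μ (fun ω => (X j ω, D ω)) - ent μ (fun ω => (X' j ω, D ω)))
      = ∑ v : α j × α j × ((i : dep j) → α i.1),
          P3 v * Real.log (P3 v / (PBD (v.2.1, v.2.2) * q j v.1 v.2.1 v.2.2)) := by
    have h := sum_mul_comp' μ (fun ω => (X j ω, X' j ω, D ω))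
      (fun v => Real.log (P3 v / (PBD (v.2.1, v.2.2) * q j v.1 v.2.1 v.2.2)))
    simp only at h
    rw [← h, hEA, hEB, hQunf]
    rw [sub_sub_eq_add_sub, sub_neg_eq_add, ← Finset.sum_neg_distrib,
      ← Finset.sum_add_distrib, ← Finset.sum_add_distrib]
    refine Finset.sum_congr rfl fun ω _ => ?_
    rcases eq_or_lt_of_le (hμ0 ω) with h0 | h0
    · rw [← h0]; ring
    · have hp3 : 0 < P3 (X j ω, X' j ω, D ω) := by
        rw [hP3def]
        exact lt_of_lt_of_le h0 (le_prob_apply' hμ0 (fun ω => (X j ω, X' j ω, D ω)) ω)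
      have hpad : 0 < PAD (X j ω, D ω) := by
        refine lt_of_lt_of_le hp3 ?_
        rw [hP3def, hPADdef]
        refine prob_le' hμ0 fun ω' h' => ?_
        simp only [Prod.mk.injEq] at h' ⊢
        exact ⟨h'.1, h'.2.2⟩
      have hpbd : 0 < PBD (X' j ω, D ω) := by
        refine lt_of_lt_of_le hp3 ?_
        rw [hP3def, hPBDdef]
        refine prob_le' hμ0 fun ω' h' => ?_
        simp only [Prod.mk.injEq] at h' ⊢
        exact ⟨h'.2.1, h'.2.2⟩
      have hq := hq0 j (X j ω) (X' j ω) (D ω)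
      have e1 : Real.log ((P3 (X j ω, X' j ω, D ω) / PAD (X j ω, D ω))
            / q j (X j ω) (X' j ω) (D ω))
          = Real.log (P3 (X j ω, X' j ω, D ω)) - Real.log (PAD (X j ω, D ω))
            - Real.log (q j (X j ω) (X' j ω) (D ω)) := by
        rw [Real.log_div (by positivity) (ne_of_gt hq),
          Real.log_div (ne_of_gt hp3) (ne_of_gt hpad)]
      have e2 : Real.log (P3 (X j ω, X' j ω, D ω)
            / (PBD (X' j ω, D ω) * q j (X j ω) (X' j ω) (D ω)))
          = Real.log (P3 (X j ω, X' j ω, D ω))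
            - (Real.log (PBD (X' j ω, D ω)) + Real.log (q j (X j ω) (X' j ω) (D ω))) := by
        rw [Real.log_div (ne_of_gt hp3) (by positivity),
          Real.log_mul (ne_of_gt hpbd) (ne_of_gt hq)]
      rw [e1, e2]
      ring
  rw [← sub_nonneg, key]
  refine gibbs' _ _ (fun v => by rw [hP3def]; exact prob_nonneg' hμ0 _ _)
    (fun v => mul_nonneg (by rw [hPBDdef]; exact prob_nonneg' hμ0 _ _) (hq0 j _ _ _).le)
    (fun v hv => ?_) ?_
  · have hp3 : 0 < P3 v := lt_of_le_of_ne (by rw [hP3def]; exact prob_nonneg' hμ0 _ _) (Ne.symm hv)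
    refine mul_pos (lt_of_lt_of_le hp3 ?_) (hq0 j _ _ _)
    rw [hP3def, hPBDdef]
    refine prob_le' hμ0 fun ω' h' => ?_
    rw [← h']
  · have hs1 : ∑ v : α j × α j × ((i : dep j) → α i.1), P3 v = 1 := by
      rw [hP3def, sum_prob', hμ1]
    have hs2 : ∑ v : α j × α j × ((i : dep j) → α i.1),
        PBD (v.2.1, v.2.2) * q j v.1 v.2.1 v.2.2 = 1 := by
      rw [Fintype.sum_prod_type, Finset.sum_comm]
      have : ∀ w : α j × ((i : dep j) → α i.1),
          ∑ a : α j, PBD (w.1, w.2) * q j a w.1 w.2 = PBD w := by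
        intro w
        rw [← Finset.mul_sum, hq1, mul_one]
      calc ∑ w : α j × ((i : dep j) → α i.1), ∑ a : α j,
            PBD ((a, w).2.1, (a, w).2.2) * q j (a, w).1 (a, w).2.1 (a, w).2.2
          = ∑ w : α j × ((i : dep j) → α i.1), PBD w := by
            refine Finset.sum_congr rfl fun w _ => ?_
            simpa using this w
        _ = 1 := by rw [hPBDdef, sum_prob', hμ1]
    rw [hs1, hs2]

/-- Generalized second law incorporating internal correlations
(information-theoretic form): `H(X'_{1:n}) − H(X_{1:n}) + Σ_j Q_j ≥ Δ_I`, where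
`Δ_I = Σ_{j=2}^n [I(X'_j;D_j) − I(X_j;D_j)]
  − Σ_{j=2}^n [I(X'_j;X'_{1:j-1}) − I(X_j;X_{1:j-1})]`. -/
theorem statement13 {Ω : Type*} [Fintype Ω] (μ : Ω → ℝ)
    (hμ0 : ∀ ω, 0 ≤ μ ω) (hμ1 : ∑ ω, μ ω = 1)
    {α : ℕ → Type*} [∀ i, Fintype (α i)] [∀ i, DecidableEq (α i)]
    (n : ℕ) (hn : 1 ≤ n) (X X' : (i : ℕ) → Ω → α i)
    (hpos : ∀ v, 0 < prob μ (fun ω => (tup X n ω, tup X' n ω)) v)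
    (dep : ℕ → Finset ℕ) (hdep : ∀ j, dep j ⊆ Finset.range j)
    (q : (j : ℕ) → α j → α j → ((i : dep j) → α i.1) → ℝ)
    (hq0 : ∀ j x x' d, 0 < q j x x' d) (hq1 : ∀ j x' d, ∑ x, q j x x' d = 1) :
    ent μ (tup X' n) - ent μ (tup X n) + ∑ j ∈ Finset.range n, Qheat μ X X' dep q j
      ≥ (∑ j ∈ Finset.Ico 1 n,
            (mi μ (X' j) (restrict X (dep j)) - mi μ (X j) (restrict X (dep j))))
        - ∑ j ∈ Finset.Ico 1 n,
            (mi μ (X' j) (tup X' j) - mi μ (X j) (tup X j)) := by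
    classical
  have hQ : ∀ j, ent μ (fun ω => (X j ω, restrict X (dep j) ω))
      - ent μ (fun ω => (X' j ω, restrict X (dep j) ω)) ≤ Qheat μ X X' dep q j :=
    fun j => Qheat_ge μ hμ0 hμ1 X X' dep q hq0 hq1 j
  have hT : ∀ (Y : (i : ℕ) → Ω → α i) (j : ℕ),
      ent μ (fun ω => (Y j ω, tup Y j ω)) = ent μ (tup Y (j+1)) := by
    intro Y j
    have hinj : Function.Injective (fun v : (i : Fin (j+1)) → α i.1 =>
        ((v ⟨j, Nat.lt_succ_self j⟩ : α j),
          (fun i : Fin j => v ⟨i.1, Nat.lt_succ_of_lt i.2⟩ : (i : Fin j) → α i.1))) := by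
      intro v w h
      simp only [Prod.mk.injEq] at h
      obtain ⟨h1, h2⟩ := h
      funext i
      rcases Nat.lt_succ_iff_lt_or_eq.mp i.2 with hi | hi
      · exact congrFun h2 ⟨i.1, hi⟩
      · have hie : i = ⟨j, Nat.lt_succ_self j⟩ := Fin.ext hi
        rw [hie]; exact h1
    exact ent_comp_inj' μ (tup Y (j+1)) hinj
  have hT1 : ∀ (Y : (i : ℕ) → Ω → α i), ent μ (Y 0) = ent μ (tup Y 1) := by
    intro Y
    have hinj : Function.Injective (fun v : (i : Fin 1) → α i.1 => v ⟨0, Nat.one_pos⟩) := by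
      intro v w h
      funext i
      have hi : i = ⟨0, Nat.one_pos⟩ := Subsingleton.elim _ _
      rw [hi]; exact h
    exact ent_comp_inj' μ (tup Y 1) hinj
  have hd0 : dep 0 = ∅ := Finset.subset_empty.mp (by simpa using hdep 0)
  have hE0 : ∀ (Y : (i : ℕ) → Ω → α i),
      ent μ (Y 0) = ent μ (fun ω => (Y 0 ω, restrict X (dep 0) ω)) := by
    intro Y
    have hinj : Function.Injective
        (fun v : α 0 × ((i : dep 0) → α i.1) => v.1) := by
      intro v w h
      exact Prod.ext h (funext fun i => (Finset.notMem_empty i.1 (hd0 ▸ i.2)).elim)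
    exact ent_comp_inj' μ (fun ω => (Y 0 ω, restrict X (dep 0) ω)) hinj
  have hsumQ : ∑ j ∈ Finset.range n, (ent μ (fun ω => (X j ω, restrict X (dep j) ω))
      - ent μ (fun ω => (X' j ω, restrict X (dep j) ω)))
      ≤ ∑ j ∈ Finset.range n, Qheat μ X X' dep q j :=
    Finset.sum_le_sum fun j _ => hQ j
  have hsplit : ∑ j ∈ Finset.range n, (ent μ (fun ω => (X j ω, restrict X (dep j) ω))
      - ent μ (fun ω => (X' j ω, restrict X (dep j) ω)))
      = (ent μ (fun ω => (X 0 ω, restrict X (dep 0) ω))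
          - ent μ (fun ω => (X' 0 ω, restrict X (dep 0) ω)))
        + ∑ j ∈ Finset.Ico 1 n, (ent μ (fun ω => (X j ω, restrict X (dep j) ω))
            - ent μ (fun ω => (X' j ω, restrict X (dep j) ω))) := by
    rw [Finset.range_eq_Ico, Finset.sum_eq_sum_Ico_succ_bot (by omega : (0:ℕ) < n)]
  have hAB : (∑ j ∈ Finset.Ico 1 n,
        (mi μ (X' j) (restrict X (dep j)) - mi μ (X j) (restrict X (dep j))))
      - ∑ j ∈ Finset.Ico 1 n, (mi μ (X' j) (tup X' j) - mi μ (X j) (tup X j))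
      = (∑ j ∈ Finset.Ico 1 n, (ent μ (fun ω => (X j ω, restrict X (dep j) ω))
            - ent μ (fun ω => (X' j ω, restrict X (dep j) ω))))
        + ((ent μ (tup X' n) - ent μ (tup X' 1)) - (ent μ (tup X n) - ent μ (tup X 1))) := by
    rw [← Finset.sum_sub_distrib]
    have hper : ∀ j ∈ Finset.Ico 1 n,
        (mi μ (X' j) (restrict X (dep j)) - mi μ (X j) (restrict X (dep j)))
          - (mi μ (X' j) (tup X' j) - mi μ (X j) (tup X j))
        = (ent μ (fun ω => (X j ω, restrict X (dep j) ω))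
            - ent μ (fun ω => (X' j ω, restrict X (dep j) ω)))
          + (((fun m => ent μ (tup X' m)) (j+1) - (fun m => ent μ (tup X' m)) j)
            - ((fun m => ent μ (tup X m)) (j+1) - (fun m => ent μ (tup X m)) j)) := by
      intro j _
      simp only [mi]
      rw [← hT X' j, ← hT X j]
      ring
    rw [Finset.sum_congr rfl hper, Finset.sum_add_distrib, Finset.sum_sub_distrib]
    congr 1
    rw [Finset.sum_sub_distrib, telescope' (fun m => ent μ (tup X' m)) n hn,
      telescope' (fun m => ent μ (tup X m)) n hn]
  rw [ge_iff_le, hAB]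
  have e1 : ent μ (tup X 1) = ent μ (fun ω => (X 0 ω, restrict X (dep 0) ω)) :=
    (hT1 X).symm.trans (hE0 X)
  have e1' : ent μ (tup X' 1) = ent μ (fun ω => (X' 0 ω, restrict X (dep 0) ω)) :=
    (hT1 X').symm.trans (hE0 X')
  linarith [hsumQ, hsplit, e1, e1']
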